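/- In the MAJSAT gadget built from a Boolean function φ on n ≥ 1 variables, the empty coordinate set is stochastically decisive if and only if at least half of all assignments satisfy φ, i.e., 2·|{s ∈ S : φ(s) = true}| ≥ 2^n. -/

import Mathlib

/-- Full-information optimizer: actions maximizing pointwise utility at state `s`. -/
def Opt {n : ℕ} {A : Type*} {X : Fin n → Type*}
    (U : A → (∀ i, X i) → ℝ) (s : ∀ i, X i) : Set A :=
  {a | ∀ b, U b s ≤ U a s}

/-- Conditional (unnormalized) expected utility of action `a` over the `I`-fiber of `s`. -/
noncomputable def condEU {n : ℕ} {A : Type*} {X : Fin n → Type*}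
    [∀ i, Fintype (X i)] [∀ i, DecidableEq (X i)]
    (U : A → (∀ i, X i) → ℝ) (P : (∀ i, X i) → ℝ)
    (I : Finset (Fin n)) (s : ∀ i, X i) (a : A) : ℝ :=
  ∑ t ∈ Finset.univ.filter (fun t : ∀ i, X i => ∀ i ∈ I, t i = s i), P t * U a t

/-- Conditional optimizer: actions maximizing conditional expected utility on the `I`-fiber. -/
noncomputable def OptS {n : ℕ} {A : Type*} {X : Fin n → Type*}
    [∀ i, Fintype (X i)] [∀ i, DecidableEq (X i)]
    (U : A → (∀ i, X i) → ℝ) (P : (∀ i, X i) → ℝ)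
    (I : Finset (Fin n)) (s : ∀ i, X i) : Set A :=
  {a | ∀ b, condEU U P I s b ≤ condEU U P I s a}

/-- `I` is statically sufficient: states agreeing on `I` have the same optimizer. -/
def StaticSufficient {n : ℕ} {A : Type*} {X : Fin n → Type*}
    (U : A → (∀ i, X i) → ℝ) (I : Finset (Fin n)) : Prop :=
  ∀ s t : ∀ i, X i, (∀ i ∈ I, s i = t i) → Opt U s = Opt U t

/-- `I` is stochastically sufficient: the conditional optimizer agrees with the
full-information optimizer at every state. -/
def StochSufficient {n : ℕ} {A : Type*} {X : Fin n → Type*}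
    [∀ i, Fintype (X i)] [∀ i, DecidableEq (X i)]
    (U : A → (∀ i, X i) → ℝ) (P : (∀ i, X i) → ℝ) (I : Finset (Fin n)) : Prop :=
  ∀ s : ∀ i, X i, OptS U P I s = Opt U s

/-- `I` is stochastically decisive: every positive-probability state's observed fiber
has a unique conditional optimal action. -/
def StochDecisive {n : ℕ} {A : Type*} {X : Fin n → Type*}
    [∀ i, Fintype (X i)] [∀ i, DecidableEq (X i)]
    (U : A → (∀ i, X i) → ℝ) (P : (∀ i, X i) → ℝ) (I : Finset (Fin n)) : Prop :=
  ∀ s : ∀ i, X i, 0 < P s → ∃ a : A, OptS U P I s = {a}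


/-- The three actions of the MAJSAT gadget. -/
inductive GAct : Type
  | accept : GAct
  | holdL : GAct
  | holdR : GAct
deriving DecidableEq

instance instFintypeGAct : Fintype GAct :=
  ⟨{GAct.accept, GAct.holdL, GAct.holdR}, fun x => by cases x <;> simp⟩

/-- Gadget utility: `accept` pays `1` on satisfying assignments and `0` otherwise;
both hold actions pay the constant `1/2 - 2^{-(n+1)}`. -/
noncomputable def gU (n : ℕ) (φ : (Fin n → Bool) → Bool) :
    GAct → (∀ _ : Fin n, Bool) → ℝ
  | GAct.accept, s => if φ s then 1 else 0
  | GAct.holdL, _ => 1 / 2 - 1 / 2 ^ (n + 1)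
  | GAct.holdR, _ => 1 / 2 - 1 / 2 ^ (n + 1)

/-- Uniform distribution on the Boolean cube. -/
noncomputable def gP (n : ℕ) : (∀ _ : Fin n, Bool) → ℝ := fun _ => 1 / 2 ^ n


lemma condEU_accept (n : ℕ) (φ : (Fin n → Bool) → Bool) (s : Fin n → Bool) :
    condEU (X := fun _ : Fin n => Bool) (gU n φ) (gP n) ∅ s GAct.accept =
      ((Finset.univ.filter fun t : Fin n → Bool => φ t = true).card : ℝ) / 2 ^ n := by
  classical
  unfold condEU gU gP
  simp only [Finset.notMem_empty, false_implies, implies_true, Finset.filter_true,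
    div_eq_mul_inv, one_mul, mul_ite, mul_one, mul_zero]
  rw [Finset.sum_ite, Finset.sum_const, Finset.sum_const, smul_zero, add_zero, nsmul_eq_mul,
    mul_comm]

lemma condEU_hold (n : ℕ) (φ : (Fin n → Bool) → Bool) (s : Fin n → Bool) (a : GAct)
    (ha : a ≠ GAct.accept) :
    condEU (X := fun _ : Fin n => Bool) (gU n φ) (gP n) ∅ s a =
      1 / 2 - 1 / 2 ^ (n + 1) := by
  have hcard : (Finset.univ : Finset (Fin n → Bool)).card = 2 ^ n := by
    simp [Finset.card_univ]
  have hU : ∀ t, gU n φ a t = 1 / 2 - 1 / 2 ^ (n + 1) := by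
    intro t; cases a with
    | accept => exact absurd rfl ha
    | holdL => rfl
    | holdR => rfl
  unfold condEU gP
  simp only [Finset.notMem_empty, false_implies, implies_true, Finset.filter_true, hU]
  rw [Finset.sum_const, hcard]
  have h2 : (2:ℝ) ^ n ≠ 0 := by positivity
  simp only [nsmul_eq_mul, Nat.cast_pow, Nat.cast_ofNat]
  rw [← mul_assoc, mul_one_div_cancel h2, one_mul]

lemma hold_lt_accept_iff (n : ℕ) (K : ℕ) :
    (1 / 2 - 1 / 2 ^ (n + 1) : ℝ) < (K : ℝ) / 2 ^ n ↔ 2 ^ n ≤ 2 * K := by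
  have h2 : (0:ℝ) < 2 ^ n := by positivity
  rw [div_sub_div _ _ (by norm_num : (2:ℝ) ≠ 0) (by positivity : (2:ℝ)^(n+1) ≠ 0),
      div_lt_div_iff₀ (by positivity) h2]
  constructor
  · intro h
    have : ((2:ℝ) ^ n - 1) < 2 * K := by
      have := h
      nlinarith [pow_pos (by norm_num : (0:ℝ) < 2) n, pow_succ (2:ℝ) n]
    have : ((2^n : ℕ) : ℝ) - 1 < ((2 * K : ℕ) : ℝ) := by push_cast; linarith
    have : (2^n : ℕ) ≤ 2 * K := by
      by_contra hc
      push_neg at hc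
      have : (2 * K : ℕ) + 1 ≤ 2 ^ n := hc
      have : ((2*K:ℕ):ℝ) + 1 ≤ ((2^n:ℕ):ℝ) := by exact_mod_cast this
      linarith
    exact this
  · intro h
    have : ((2^n : ℕ) : ℝ) ≤ ((2 * K : ℕ) : ℝ) := by exact_mod_cast h
    push_cast at this
    nlinarith [pow_pos (by norm_num : (0:ℝ) < 2) n, pow_succ (2:ℝ) n]

theorem majsat_gadget_decisiveness
    (n : ℕ) (hn : 1 ≤ n) (φ : (Fin n → Bool) → Bool) :
    StochDecisive (X := fun _ : Fin n => Bool) (gU n φ) (gP n) (∅ : Finset (Fin n)) ↔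
      2 ^ n ≤ 2 * (Finset.univ.filter fun s : Fin n → Bool => φ s = true).card := by
  set K := (Finset.univ.filter fun s : Fin n → Bool => φ s = true).card with hK
  constructor
  · intro hdec
    obtain ⟨a, ha⟩ := hdec (fun _ => false) (by unfold gP; positivity)
    rw [← hold_lt_accept_iff n K]
    by_contra hlt
    push_neg at hlt
    have hL : GAct.holdL ∈ OptS (X := fun _ : Fin n => Bool) (gU n φ) (gP n) ∅ (fun _ => false) := by
      intro b
      rw [condEU_hold n φ _ GAct.holdL (by simp)]
      cases b with
      | accept => rw [condEU_accept]; exact hlt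
      | holdL => rw [condEU_hold n φ _ GAct.holdL (by simp)]
      | holdR => rw [condEU_hold n φ _ GAct.holdR (by simp)]
    have hR : GAct.holdR ∈ OptS (X := fun _ : Fin n => Bool) (gU n φ) (gP n) ∅ (fun _ => false) := by
      intro b
      rw [condEU_hold n φ _ GAct.holdR (by simp)]
      cases b with
      | accept => rw [condEU_accept]; exact hlt
      | holdL => rw [condEU_hold n φ _ GAct.holdL (by simp)]
      | holdR => rw [condEU_hold n φ _ GAct.holdR (by simp)]
    rw [ha] at hL hR
    simp only [Set.mem_singleton_iff] at hL hR
    exact GAct.noConfusion (hL.trans hR.symm)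
  · intro hmaj s _
    refine ⟨GAct.accept, ?_⟩
    have hlt : (1 / 2 - 1 / 2 ^ (n + 1) : ℝ) < (K : ℝ) / 2 ^ n :=
      (hold_lt_accept_iff n K).mpr hmaj
    ext b
    simp only [Set.mem_singleton_iff]
    constructor
    · intro hb
      cases b with
      | accept => rfl
      | holdL =>
        have := hb GAct.accept
        rw [condEU_accept, condEU_hold n φ _ GAct.holdL (by simp)] at this
        linarith
      | holdR =>
        have := hb GAct.accept
        rw [condEU_accept, condEU_hold n φ _ GAct.holdR (by simp)] at this
        linarith
    · rintro rfl
      intro b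
      rw [condEU_accept]
      cases b with
      | accept => rw [condEU_accept]
      | holdL => rw [condEU_hold n φ _ GAct.holdL (by simp)]; linarith
      | holdR => rw [condEU_hold n φ _ GAct.holdR (by simp)]; linarith
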